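/- Odd power-series solution of the algebraic Mathieu equation: let m, h be real numbers and let (a_s)_{s≥1} be the sequence of real numbers defined by an arbitrary a₁, by a₂ = −(m − 1)·a₁/6, and by the recurrence a_{s+1} = (((2s−1)² − m)·a_s + 4h²·a_{s−1}) / (2s(2s+1)) for all s ≥ 2. Then the power series f(ν) := ∑_{s=1}^{∞} a_s·ν^{2s−1} converges for every ν with |ν| < 1, and the function f so defined satisfies (1 − ν²)·f''(ν) − ν·f'(ν) + (m − 4h²ν²)·f(ν) = 0 for all ν ∈ (−1, 1). -/

import Mathlib

open Real

lemma summable_cubic {r : ℝ} (hr : |r| < 1) :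
    Summable (fun k : ℕ => ((k : ℝ) + 1) ^ 3 * r ^ k) := by
  have hr' : ‖r‖ < 1 := by rwa [Real.norm_eq_abs]
  have h3 := summable_pow_mul_geometric_of_norm_lt_one 3 hr'
  have h2 := summable_pow_mul_geometric_of_norm_lt_one 2 hr'
  have h1 := summable_pow_mul_geometric_of_norm_lt_one 1 hr'
  have h0 := summable_pow_mul_geometric_of_norm_lt_one 0 hr'
  refine (h3.add ((h2.mul_left 3).add ((h1.mul_left 3).add h0))).congr fun k => ?_
  ring

lemma summable_of_cubic_bound {v : ℕ → ℝ} {r C : ℝ} (hr : |r| < 1)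
    (hv : ∀ k, |v k| ≤ C * (((k : ℝ) + 1) ^ 3 * r ^ k)) : Summable v :=
  Summable.of_norm_bounded ((summable_cubic hr).mul_left C) (fun k => by
    simpa using hv k)

lemma hasDerivAt_tsum_pow (u : ℕ → ℝ) (C : ℝ) (e : ℕ → ℕ)
    (hu : ∀ k, |u k| ≤ C * ((k : ℝ) + 1) ^ 2)
    (he1 : ∀ k, k ≤ e k) (he2 : ∀ k, (e k : ℝ) ≤ 3 * (k : ℝ) + 3)
    {x : ℝ} (hx : |x| < 1) :
    HasDerivAt (fun t : ℝ => ∑' k, u k * t ^ e k)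
      (∑' k, u k * (e k : ℝ) * x ^ (e k - 1)) x := by
  have hC : 0 ≤ C := by
    have h0 := hu 0
    have h1 := abs_nonneg (u 0)
    norm_num at h0
    linarith
  set r : ℝ := (|x| + 1) / 2 with hrdef
  have hax := abs_nonneg x
  have hr0 : 0 < r := by rw [hrdef]; linarith
  have hxr : |x| < r := by rw [hrdef]; linarith
  have hr1 : r < 1 := by rw [hrdef]; linarith
  have hrabs : |r| < 1 := by rwa [abs_of_pos hr0]
  have hmem : x ∈ Set.Ioo (-r) r := ⟨(abs_lt.mp hxr).1, (abs_lt.mp hxr).2⟩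
  have htle : ∀ t : ℝ, t ∈ Set.Ioo (-r) r → |t| ≤ r := fun t ht =>
    le_of_lt (abs_lt.mpr ⟨ht.1, ht.2⟩)
  -- bound for the derived series, uniform on the ball
  have hpow : ∀ (t : ℝ), t ∈ Set.Ioo (-r) r → ∀ k : ℕ, |t| ^ (e k - 1) ≤ r ^ k / r := by
    intro t ht k
    have h1 : |t| ^ (e k - 1) ≤ r ^ (e k - 1) :=
      pow_le_pow_left₀ (abs_nonneg t) (htle t ht) _
    have h2 : r ^ (e k - 1) ≤ r ^ (k - 1) :=
      pow_le_pow_of_le_one hr0.le hr1.le (Nat.sub_le_sub_right (he1 k) 1)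
    have h3 : r ^ (k - 1) ≤ r ^ k / r := by
      rcases k with _ | j
      · simp only [Nat.zero_sub, pow_zero]
        rw [le_div_iff₀ hr0, one_mul]
        exact hr1.le
      · simp only [Nat.add_sub_cancel]
        rw [pow_succ, mul_div_assoc, div_self hr0.ne', mul_one]
    linarith
  have hmaj : Summable (fun k : ℕ => (3 * C / r) * (((k : ℝ) + 1) ^ 3 * r ^ k)) :=
    (summable_cubic hrabs).mul_left _
  have hbound : ∀ (k : ℕ) (t : ℝ), t ∈ Set.Ioo (-r) r →
      ‖u k * (e k : ℝ) * t ^ (e k - 1)‖ ≤ (3 * C / r) * (((k : ℝ) + 1) ^ 3 * r ^ k) := by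
    intro k t ht
    rw [Real.norm_eq_abs, abs_mul, abs_mul, abs_pow, Nat.abs_cast]
    have step : |u k| * (e k : ℝ) * |t| ^ (e k - 1) ≤
        C * ((k : ℝ) + 1) ^ 2 * (3 * (k : ℝ) + 3) * (r ^ k / r) := by
      refine mul_le_mul (mul_le_mul (hu k) (he2 k) (Nat.cast_nonneg _) ?_)
        (hpow t ht k) (pow_nonneg (abs_nonneg t) _) ?_
      · positivity
      · have hk0 : (0 : ℝ) ≤ (k : ℝ) := Nat.cast_nonneg k
        exact mul_nonneg (mul_nonneg hC (sq_nonneg _)) (by linarith)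
    refine step.trans (le_of_eq ?_)
    field_simp
  have hsm : ∀ t : ℝ, t ∈ Set.Ioo (-r) r → Summable (fun k => u k * t ^ e k) := by
    intro t ht
    refine summable_of_cubic_bound (r := r) (C := C) hrabs fun k => ?_
    rw [abs_mul, abs_pow]
    have h1 : |t| ^ e k ≤ r ^ e k := pow_le_pow_left₀ (abs_nonneg t) (htle t ht) _
    have h2 : r ^ e k ≤ r ^ k := pow_le_pow_of_le_one hr0.le hr1.le (he1 k)
    have hk0 : (0 : ℝ) ≤ (k : ℝ) := Nat.cast_nonneg k
    have h3 : |u k| ≤ C * ((k : ℝ) + 1) ^ 2 := hu k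
    have h4 : (0 : ℝ) ≤ |u k| := abs_nonneg _
    have h5 : (0 : ℝ) ≤ |t| ^ e k := pow_nonneg (abs_nonneg t) _
    have h6 : (0 : ℝ) ≤ r ^ k := pow_nonneg hr0.le k
    nlinarith [mul_le_mul h3 (h1.trans h2) h5 (by positivity : (0:ℝ) ≤ C * ((k:ℝ)+1)^2),
      mul_nonneg (mul_nonneg (mul_nonneg hC (sq_nonneg ((k:ℝ)+1))) h6) hk0]
  refine hasDerivAt_of_tendstoUniformlyOn isOpen_Ioo
    (tendstoUniformlyOn_tsum hmaj hbound) ?_ (fun t ht => (hsm t ht).hasSum) hmem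
  refine Filter.Eventually.of_forall fun N => fun t _ => ?_
  refine HasDerivAt.fun_sum fun k _ => ?_
  simpa [mul_assoc] using (hasDerivAt_pow (e k) t).const_mul (u k)

set_option maxHeartbeats 1000000 in
lemma mathieu_coeff_bound (m h : ℝ) (a : ℕ → ℝ)
    (hrec : ∀ s : ℕ, 2 ≤ s →
      a (s + 1) = (((2 * (s : ℝ) - 1) ^ 2 - m) * a s + 4 * h ^ 2 * a (s - 1)) /
        (2 * (s : ℝ) * (2 * (s : ℝ) + 1))) :
    ∃ C : ℝ, 0 ≤ C ∧ ∀ k : ℕ, |a (k + 1)| ≤ C := by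
  set K : ℝ := |m| + 4 * h ^ 2 with hKdef
  have hK0 : 0 ≤ K := by positivity
  set B : ℝ := max |a 1| |a 2| with hBdef
  have hB0 : 0 ≤ B := le_trans (abs_nonneg _) (le_max_left _ _)
  have key : ∀ s : ℕ, 1 ≤ s →
      max |a s| |a (s + 1)| ≤ B * Real.exp (K / 4 * (1 - 1 / (s : ℝ))) := by
    intro s hs
    induction s, hs using Nat.le_induction with
    | base => norm_num [hBdef]
    | succ s hs ih =>
      have hs1 : (1 : ℝ) ≤ (s : ℝ) := by exact_mod_cast hs
      have hsp : (0 : ℝ) < (s : ℝ) := by linarith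
      have hsp1 : (0 : ℝ) < (s : ℝ) + 1 := by linarith
      have hrec' := hrec (s + 1) (by omega)
      simp only [Nat.add_sub_cancel] at hrec'
      push_cast at hrec'
      have hd : (0 : ℝ) < 2 * ((s : ℝ) + 1) * (2 * ((s : ℝ) + 1) + 1) := by nlinarith
      set M : ℝ := max |a s| |a (s + 1)| with hMdef
      have hadd1 : |a (s + 1)| ≤ M := le_max_right _ _
      have haS : |a s| ≤ M := le_max_left _ _
      have hM0 : 0 ≤ M := le_trans (abs_nonneg _) (le_max_left _ _)
      set q : ℝ := K / 4 * (1 / (s : ℝ) - 1 / ((s : ℝ) + 1)) with hqdef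
      have hq0 : 0 ≤ q := by
        have h1 : 1 / ((s : ℝ) + 1) ≤ 1 / (s : ℝ) :=
          one_div_le_one_div_of_le hsp (by linarith)
        have : 0 ≤ K / 4 := by positivity
        rw [hqdef]
        nlinarith
      -- |a (s+2)| * d ≤ ((2(s+1)-1)^2 + K) * M
      have hnum : a (s + 1 + 1) * (2 * ((s : ℝ) + 1) * (2 * ((s : ℝ) + 1) + 1)) =
          ((2 * ((s : ℝ) + 1) - 1) ^ 2 - m) * a (s + 1) + 4 * h ^ 2 * a s := by
        rw [hrec']; field_simp
      have h2 : |a (s + 1 + 1)| * (2 * ((s : ℝ) + 1) * (2 * ((s : ℝ) + 1) + 1)) =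
          |((2 * ((s : ℝ) + 1) - 1) ^ 2 - m) * a (s + 1) + 4 * h ^ 2 * a s| := by
        rw [← abs_of_pos hd, ← abs_mul, hnum]
      have t1 : |((2 * ((s : ℝ) + 1) - 1) ^ 2 - m) * a (s + 1)| ≤
          ((2 * ((s : ℝ) + 1) - 1) ^ 2 + |m|) * M := by
        rw [abs_mul]
        refine mul_le_mul ?_ hadd1 (abs_nonneg _) (by positivity)
        calc |(2 * ((s : ℝ) + 1) - 1) ^ 2 - m| ≤ |(2 * ((s : ℝ) + 1) - 1) ^ 2| + |m| :=
              abs_sub _ _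
          _ = (2 * ((s : ℝ) + 1) - 1) ^ 2 + |m| := by rw [abs_of_nonneg (sq_nonneg _)]
      have t2 : |4 * h ^ 2 * a s| ≤ 4 * h ^ 2 * M := by
        rw [abs_mul, abs_of_nonneg (by positivity : (0 : ℝ) ≤ 4 * h ^ 2)]
        exact mul_le_mul_of_nonneg_left haS (by positivity)
      have h3 : |a (s + 1 + 1)| * (2 * ((s : ℝ) + 1) * (2 * ((s : ℝ) + 1) + 1)) ≤
          ((2 * ((s : ℝ) + 1) - 1) ^ 2 + K) * M := by
        rw [h2]
        calc |((2 * ((s : ℝ) + 1) - 1) ^ 2 - m) * a (s + 1) + 4 * h ^ 2 * a s|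
            ≤ |((2 * ((s : ℝ) + 1) - 1) ^ 2 - m) * a (s + 1)| + |4 * h ^ 2 * a s| :=
              abs_add_le _ _
          _ ≤ ((2 * ((s : ℝ) + 1) - 1) ^ 2 + |m|) * M + 4 * h ^ 2 * M := add_le_add t1 t2
          _ = ((2 * ((s : ℝ) + 1) - 1) ^ 2 + K) * M := by rw [hKdef]; ring
      -- (p^2 + K) ≤ (1 + q) * d
      have hqK : q * (4 * (s : ℝ) * ((s : ℝ) + 1)) = K := by
        have e1 : (1 / (s : ℝ)) * (s : ℝ) = 1 := one_div_mul_cancel hsp.ne'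
        have e2 : (1 / ((s : ℝ) + 1)) * ((s : ℝ) + 1) = 1 := one_div_mul_cancel hsp1.ne'
        rw [hqdef]
        linear_combination (K * ((s : ℝ) + 1)) * e1 - (K * (s : ℝ)) * e2
      have hKq : K ≤ q * (2 * ((s : ℝ) + 1) * (2 * ((s : ℝ) + 1) + 1)) := by
        rw [← hqK]
        exact mul_le_mul_of_nonneg_left (by nlinarith) hq0
      have hp2 : (2 * ((s : ℝ) + 1) - 1) ^ 2 ≤ 2 * ((s : ℝ) + 1) * (2 * ((s : ℝ) + 1) + 1) := by
        nlinarith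
      have h4 : |a (s + 1 + 1)| ≤ (1 + q) * M := by
        have hb : ((2 * ((s : ℝ) + 1) - 1) ^ 2 + K) * M ≤
            (1 + q) * M * (2 * ((s : ℝ) + 1) * (2 * ((s : ℝ) + 1) + 1)) := by
          have e3 := mul_le_mul_of_nonneg_right hp2 hM0
          have e4 := mul_le_mul_of_nonneg_right hKq hM0
          have e5 : (1 + q) * M * (2 * ((s : ℝ) + 1) * (2 * ((s : ℝ) + 1) + 1)) =
              2 * ((s : ℝ) + 1) * (2 * ((s : ℝ) + 1) + 1) * M +
              q * (2 * ((s : ℝ) + 1) * (2 * ((s : ℝ) + 1) + 1)) * M := by ring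
          have e6 : ((2 * ((s : ℝ) + 1) - 1) ^ 2 + K) * M =
              (2 * ((s : ℝ) + 1) - 1) ^ 2 * M + K * M := by ring
          rw [e5, e6]
          exact add_le_add e3 e4
        exact le_of_mul_le_mul_right (h3.trans hb) hd
      have h5 : |a (s + 1 + 1)| ≤ Real.exp q * M := by
        refine h4.trans (mul_le_mul_of_nonneg_right ?_ hM0)
        have := Real.add_one_le_exp q
        linarith
      have h6 : |a (s + 1)| ≤ Real.exp q * M := by
        have h1 : (1 : ℝ) ≤ Real.exp q := Real.one_le_exp hq0
        calc |a (s + 1)| ≤ M := hadd1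
          _ = 1 * M := (one_mul M).symm
          _ ≤ Real.exp q * M := mul_le_mul_of_nonneg_right h1 hM0
      have hexp : Real.exp q * Real.exp (K / 4 * (1 - 1 / (s : ℝ))) =
          Real.exp (K / 4 * (1 - 1 / ((s : ℝ) + 1))) := by
        rw [← Real.exp_add]; congr 1; rw [hqdef]; ring
      have hfin : Real.exp q * M ≤ B * Real.exp (K / 4 * (1 - 1 / ((s : ℝ) + 1))) := by
        calc Real.exp q * M ≤ Real.exp q * (B * Real.exp (K / 4 * (1 - 1 / (s : ℝ)))) :=
              mul_le_mul_of_nonneg_left ih (Real.exp_nonneg q)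
          _ = B * (Real.exp q * Real.exp (K / 4 * (1 - 1 / (s : ℝ)))) := by ring
          _ = B * Real.exp (K / 4 * (1 - 1 / ((s : ℝ) + 1))) := by rw [hexp]
      have hgoal := max_le (h6.trans hfin) (h5.trans hfin)
      push_cast
      exact hgoal
  refine ⟨B * Real.exp (K / 4), by positivity, fun k => ?_⟩
  have hk := key (k + 1) (by omega)
  push_cast at hk
  have h1 : |a (k + 1)| ≤ B * Real.exp (K / 4 * (1 - 1 / ((k : ℝ) + 1))) :=
    le_trans (le_max_left _ _) hk
  refine h1.trans (mul_le_mul_of_nonneg_left (Real.exp_le_exp.mpr ?_) hB0)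
  have hx : (0 : ℝ) < (k : ℝ) + 1 := by positivity
  have h2 : (0 : ℝ) ≤ 1 / ((k : ℝ) + 1) := by positivity
  nlinarith


/-- The odd power series `∑_{s≥1} a_s ν^{2s−1}` with coefficient sequence `a`. -/
noncomputable def oddMathieuSeries (a : ℕ → ℝ) (ν : ℝ) : ℝ :=
  ∑' s : ℕ, a (s + 1) * ν ^ (2 * s + 1)

set_option maxHeartbeats 1000000 in
/-- odd power-series solution of the algebraic Mathieu equation. -/
theorem odd_series_solves_algebraic_mathieu
    (m h : ℝ) (a : ℕ → ℝ)
    (ha2 : a 2 = -(m - 1) * a 1 / 6)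
    (hrec : ∀ s : ℕ, 2 ≤ s →
      a (s + 1) = (((2 * (s : ℝ) - 1) ^ 2 - m) * a s + 4 * h ^ 2 * a (s - 1)) /
        (2 * (s : ℝ) * (2 * (s : ℝ) + 1))) :
    (∀ ν : ℝ, |ν| < 1 → Summable (fun s : ℕ => a (s + 1) * ν ^ (2 * s + 1))) ∧
    ∀ ν ∈ Set.Ioo (-1 : ℝ) 1,
      (1 - ν ^ 2) * deriv (deriv (oddMathieuSeries a)) ν -
        ν * deriv (oddMathieuSeries a) ν +
        (m - 4 * h ^ 2 * ν ^ 2) * oddMathieuSeries a ν = 0 := by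
  obtain ⟨C, hC0, hC⟩ := mathieu_coeff_bound m h a hrec
  -- general summability helper
  have hS : ∀ (ν : ℝ), |ν| < 1 → ∀ (b : ℕ → ℝ) (P : ℕ → ℝ) (e : ℕ → ℕ),
      (∀ k, |b k| ≤ C) → (∀ k, 0 ≤ P k) → (∀ k, P k ≤ 30 * ((k : ℝ) + 1) ^ 3) →
      (∀ k, k ≤ e k) → Summable (fun k => b k * P k * ν ^ e k) := by
    intro ν hν1 b P e hb hP0 hP hke
    refine summable_of_cubic_bound (r := |ν|) (C := 30 * C) (by rwa [abs_abs]) fun k => ?_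
    rw [abs_mul, abs_mul, abs_pow, abs_of_nonneg (hP0 k)]
    have hpw : |ν| ^ e k ≤ |ν| ^ k := pow_le_pow_of_le_one (abs_nonneg ν) hν1.le (hke k)
    have h5 : (0 : ℝ) ≤ |ν| ^ e k := pow_nonneg (abs_nonneg _) _
    calc |b k| * P k * |ν| ^ e k ≤ C * (30 * ((k : ℝ) + 1) ^ 3) * |ν| ^ k := by
          refine mul_le_mul (mul_le_mul (hb k) (hP k) (hP0 k) hC0) hpw h5 ?_
          exact mul_nonneg hC0 (by positivity)
      _ = 30 * C * (((k : ℝ) + 1) ^ 3 * |ν| ^ k) := by ring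
  have hcube : ∀ k : ℕ, (1 : ℝ) ≤ ((k : ℝ) + 1) ^ 3 := by
    intro k
    have h1k : (1 : ℝ) ≤ (k : ℝ) + 1 := by
      have := Nat.cast_nonneg (α := ℝ) k; linarith
    calc (1 : ℝ) = 1 ^ 3 := by norm_num
      _ ≤ ((k : ℝ) + 1) ^ 3 := pow_le_pow_left₀ (by norm_num) h1k 3
  have part1 : ∀ ν : ℝ, |ν| < 1 → Summable (fun s : ℕ => a (s + 1) * ν ^ (2 * s + 1)) := by
    intro ν hν1
    refine (hS ν hν1 (fun k => a (k + 1)) (fun _ => 1) (fun k => 2 * k + 1) hC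
      (fun _ => zero_le_one) (fun k => by show (1:ℝ) ≤ 30 * ((k : ℝ) + 1) ^ 3; linarith [hcube k])
      (fun k => by show k ≤ 2 * k + 1; omega)).congr fun k => by ring
  refine ⟨part1, ?_⟩
  intro ν hν
  have hν1 : |ν| < 1 := abs_lt.mpr ⟨hν.1, hν.2⟩
  have hkc : ∀ k : ℕ, (0 : ℝ) ≤ (k : ℝ) := fun k => Nat.cast_nonneg k
  -- first derivative
  have hd1 : ∀ t ∈ Set.Ioo (-1 : ℝ) 1, HasDerivAt (oddMathieuSeries a)
      (∑' k : ℕ, a (k + 1) * (2 * (k : ℝ) + 1) * t ^ (2 * k)) t := by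
    intro t ht
    have htabs : |t| < 1 := abs_lt.mpr ⟨ht.1, ht.2⟩
    have hb1 : ∀ k : ℕ, |a (k + 1)| ≤ C * ((k : ℝ) + 1) ^ 2 := fun k =>
      le_trans (hC k) (by nlinarith [mul_nonneg hC0 (hkc k), mul_nonneg (mul_nonneg hC0 (hkc k)) (hkc k)])
    have H := hasDerivAt_tsum_pow (fun k => a (k + 1)) C (fun k => 2 * k + 1)
      hb1
      (fun k => by show k ≤ 2 * k + 1; omega)
      (fun k => by show ((2 * k + 1 : ℕ) : ℝ) ≤ 3 * (k : ℝ) + 3; push_cast; linarith [hkc k]) htabs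
    convert H using 1
    · rfl
    refine tsum_congr fun k => ?_
    push_cast [Nat.add_sub_cancel]
    ring
  -- second derivative
  have hd2 : ∀ t ∈ Set.Ioo (-1 : ℝ) 1,
      HasDerivAt (fun t : ℝ => ∑' k : ℕ, a (k + 1) * (2 * (k : ℝ) + 1) * t ^ (2 * k))
      (∑' k : ℕ, a (k + 1) * (2 * (k : ℝ) + 1) * (2 * (k : ℝ)) * t ^ (2 * k - 1)) t := by
    intro t ht
    have htabs : |t| < 1 := abs_lt.mpr ⟨ht.1, ht.2⟩
    have H := hasDerivAt_tsum_pow (fun k => a (k + 1) * (2 * (k : ℝ) + 1)) (2 * C)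
      (fun k => 2 * k)
      (fun k => by
        rw [abs_mul, abs_of_nonneg (by positivity : (0 : ℝ) ≤ 2 * (k : ℝ) + 1)]
        have h1 : |a (k + 1)| * (2 * (k : ℝ) + 1) ≤ C * (2 * (k : ℝ) + 1) :=
          mul_le_mul_of_nonneg_right (hC k) (by positivity)
        nlinarith [h1, mul_nonneg hC0 (hkc k), mul_nonneg (mul_nonneg hC0 (hkc k)) (hkc k)])
      (fun k => by show k ≤ 2 * k; omega)
      (fun k => by show ((2 * k : ℕ) : ℝ) ≤ 3 * (k : ℝ) + 3; push_cast; linarith [hkc k]) htabs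
    convert H using 1
    refine tsum_congr fun k => ?_
    push_cast
    ring
  have e1 : deriv (oddMathieuSeries a) ν =
      ∑' k : ℕ, a (k + 1) * (2 * (k : ℝ) + 1) * ν ^ (2 * k) := (hd1 ν hν).deriv
  have e2 : deriv (deriv (oddMathieuSeries a)) ν =
      ∑' k : ℕ, a (k + 1) * (2 * (k : ℝ) + 1) * (2 * (k : ℝ)) * ν ^ (2 * k - 1) := by
    have hEq : deriv (oddMathieuSeries a) =ᶠ[nhds ν]
        (fun t : ℝ => ∑' k : ℕ, a (k + 1) * (2 * (k : ℝ) + 1) * t ^ (2 * k)) := by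
      filter_upwards [isOpen_Ioo.mem_nhds hν] with t ht using (hd1 t ht).deriv
    rw [hEq.deriv_eq]
    exact (hd2 ν hν).deriv
  -- summabilities of the five series
  have SA : Summable (fun k : ℕ =>
      a (k + 2) * ((2 * (k : ℝ) + 3) * (2 * (k : ℝ) + 2)) * ν ^ (2 * k + 1)) :=
    hS ν hν1 (fun k => a (k + 2)) (fun k => (2 * (k : ℝ) + 3) * (2 * (k : ℝ) + 2))
      (fun k => 2 * k + 1) (fun k => hC (k + 1)) (fun k => by positivity)
      (fun k => by
        show (2 * (k : ℝ) + 3) * (2 * (k : ℝ) + 2) ≤ 30 * ((k : ℝ) + 1) ^ 3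
        nlinarith [hkc k, mul_nonneg (mul_nonneg (hkc k) (hkc k)) (hkc k), mul_nonneg (hkc k) (hkc k)])
      (fun k => by show k ≤ 2 * k + 1; omega)
  have SB : Summable (fun k : ℕ =>
      a (k + 1) * (2 * (k : ℝ) + 1) * (2 * (k : ℝ)) * ν ^ (2 * k - 1)) :=
    (hS ν hν1 (fun k => a (k + 1)) (fun k => (2 * (k : ℝ) + 1) * (2 * (k : ℝ)))
      (fun k => 2 * k - 1) hC (fun k => by positivity)
      (fun k => by
        show (2 * (k : ℝ) + 1) * (2 * (k : ℝ)) ≤ 30 * ((k : ℝ) + 1) ^ 3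
        nlinarith [hkc k, mul_nonneg (mul_nonneg (hkc k) (hkc k)) (hkc k), mul_nonneg (hkc k) (hkc k)])
      (fun k => by show k ≤ 2 * k - 1; omega)).congr fun k => by ring
  have SD : Summable (fun k : ℕ => a (k + 1) * (2 * (k : ℝ) + 1) * ν ^ (2 * k)) :=
    hS ν hν1 (fun k => a (k + 1)) (fun k => 2 * (k : ℝ) + 1) (fun k => 2 * k) hC
      (fun k => by positivity)
      (fun k => by
        show 2 * (k : ℝ) + 1 ≤ 30 * ((k : ℝ) + 1) ^ 3
        nlinarith [hkc k, mul_nonneg (mul_nonneg (hkc k) (hkc k)) (hkc k), mul_nonneg (hkc k) (hkc k)])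
      (fun k => by show k ≤ 2 * k; omega)
  have SE : Summable (fun k : ℕ => a (k + 1) * ν ^ (2 * k + 1)) := part1 ν hν1
  have Sc : Summable (fun k : ℕ => (if k = 0 then 0 else a k) * ν ^ (2 * k + 1)) := by
    refine (hS ν hν1 (fun k => if k = 0 then 0 else a k) (fun _ => 1) (fun k => 2 * k + 1)
      ?_ (fun _ => zero_le_one) (fun k => by show (1:ℝ) ≤ 30 * ((k : ℝ) + 1) ^ 3; linarith [hcube k])
      (fun k => by show k ≤ 2 * k + 1; omega)).congr fun k => by ring
    intro k
    rcases k with _ | j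
    · simpa using hC0
    · simpa using hC j
  -- combined series, termwise zero
  have hcomb : HasSum (fun k : ℕ =>
      a (k + 2) * ((2 * (k : ℝ) + 3) * (2 * (k : ℝ) + 2)) * ν ^ (2 * k + 1)
      - ν ^ 2 * (a (k + 1) * (2 * (k : ℝ) + 1) * (2 * (k : ℝ)) * ν ^ (2 * k - 1))
      - ν * (a (k + 1) * (2 * (k : ℝ) + 1) * ν ^ (2 * k))
      + m * (a (k + 1) * ν ^ (2 * k + 1))
      - 4 * h ^ 2 * ((if k = 0 then 0 else a k) * ν ^ (2 * k + 1)))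
      ((∑' k : ℕ, a (k + 2) * ((2 * (k : ℝ) + 3) * (2 * (k : ℝ) + 2)) * ν ^ (2 * k + 1))
      - ν ^ 2 * (∑' k : ℕ, a (k + 1) * (2 * (k : ℝ) + 1) * (2 * (k : ℝ)) * ν ^ (2 * k - 1))
      - ν * (∑' k : ℕ, a (k + 1) * (2 * (k : ℝ) + 1) * ν ^ (2 * k))
      + m * (∑' k : ℕ, a (k + 1) * ν ^ (2 * k + 1))
      - 4 * h ^ 2 * (∑' k : ℕ, (if k = 0 then 0 else a k) * ν ^ (2 * k + 1))) :=
    ((((SA.hasSum.sub (SB.hasSum.mul_left (ν ^ 2))).sub (SD.hasSum.mul_left ν)).add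
      (SE.hasSum.mul_left m)).sub (Sc.hasSum.mul_left (4 * h ^ 2)))
  have hterm : ∀ k : ℕ,
      a (k + 2) * ((2 * (k : ℝ) + 3) * (2 * (k : ℝ) + 2)) * ν ^ (2 * k + 1)
      - ν ^ 2 * (a (k + 1) * (2 * (k : ℝ) + 1) * (2 * (k : ℝ)) * ν ^ (2 * k - 1))
      - ν * (a (k + 1) * (2 * (k : ℝ) + 1) * ν ^ (2 * k))
      + m * (a (k + 1) * ν ^ (2 * k + 1))
      - 4 * h ^ 2 * ((if k = 0 then 0 else a k) * ν ^ (2 * k + 1)) = 0 := by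
    intro k
    rcases k with _ | j
    · norm_num
      linear_combination (6 : ℝ) * ν * ha2
    · have hr := hrec (j + 2) (by omega)
      have hidx : j + 2 - 1 = j + 1 := rfl
      rw [hidx] at hr
      push_cast at hr
      have hden : (2 * ((j : ℝ) + 2) * (2 * ((j : ℝ) + 2) + 1)) ≠ 0 := by positivity
      rw [eq_div_iff hden] at hr
      rw [if_neg (Nat.succ_ne_zero j)]
      have hexp : 2 * (j + 1) - 1 = 2 * j + 1 := by omega
      rw [hexp]
      push_cast
      linear_combination (ν ^ (2 * j + 3)) * hr
  have hsum0 :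
      (∑' k : ℕ, a (k + 2) * ((2 * (k : ℝ) + 3) * (2 * (k : ℝ) + 2)) * ν ^ (2 * k + 1))
      - ν ^ 2 * (∑' k : ℕ, a (k + 1) * (2 * (k : ℝ) + 1) * (2 * (k : ℝ)) * ν ^ (2 * k - 1))
      - ν * (∑' k : ℕ, a (k + 1) * (2 * (k : ℝ) + 1) * ν ^ (2 * k))
      + m * (∑' k : ℕ, a (k + 1) * ν ^ (2 * k + 1))
      - 4 * h ^ 2 * (∑' k : ℕ, (if k = 0 then 0 else a k) * ν ^ (2 * k + 1)) = 0 := by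
    rw [funext hterm] at hcomb
    exact hcomb.unique hasSum_zero
  -- shift identities
  have hBA : (∑' k : ℕ, a (k + 1) * (2 * (k : ℝ) + 1) * (2 * (k : ℝ)) * ν ^ (2 * k - 1)) =
      ∑' k : ℕ, a (k + 2) * ((2 * (k : ℝ) + 3) * (2 * (k : ℝ) + 2)) * ν ^ (2 * k + 1) := by
    rw [Summable.tsum_eq_zero_add SB]
    norm_num
    exact tsum_congr fun k => by
      push_cast [show 2 * (k + 1) - 1 = 2 * k + 1 from by omega]
      ring
  have hEc : ν ^ 2 * (∑' k : ℕ, a (k + 1) * ν ^ (2 * k + 1)) =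
      ∑' k : ℕ, (if k = 0 then 0 else a k) * ν ^ (2 * k + 1) := by
    rw [← tsum_mul_left, Summable.tsum_eq_zero_add Sc]
    norm_num
    exact tsum_congr fun k => by
      push_cast
      ring
  rw [e1, e2, show oddMathieuSeries a ν = ∑' k : ℕ, a (k + 1) * ν ^ (2 * k + 1) from rfl]
  linear_combination hsum0 + hBA - 4 * h ^ 2 * hEc
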